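/- Let Q ⊂ ℝⁿ be a closed cube and let μ_j, μ be finite nonnegative non-atomic Borel measures on Q such that μ_j converges weakly-* to μ. Then for every ε > 0 there exists δ > 0 such that for every closed sub-cube Q' ⊂ Q with faces parallel to the coordinate hyperplanes and Lebesgue measure less than δ, one has sup_j μ_j(Q') < ε. -/

import Mathlib

open MeasureTheory Filter Topology Metric ENNReal

lemma small_cball {n : ℕ} (ν : Measure (Fin n → ℝ)) [IsFiniteMeasure ν] (x : Fin n → ℝ)
    (h : ν {x} = 0) {ε : ℝ≥0∞} (hε : 0 < ε) : ∃ η > 0, ν (closedBall x η) < ε := by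
  have h1 : Tendsto (fun r => ν (cthickening r {x})) (𝓝 0) (𝓝 (ν {x})) :=
    tendsto_measure_cthickening_of_isClosed ⟨1, one_pos, measure_ne_top _ _⟩ isClosed_singleton
  rw [h] at h1
  have h2 : ∀ᶠ r in 𝓝[>] (0:ℝ), ν (cthickening r {x}) < ε :=
    (h1.mono_left nhdsWithin_le_nhds).eventually_lt_const hε
  obtain ⟨r, hr1, hr2⟩ := (h2.and eventually_mem_nhdsWithin).exists
  refine ⟨r, hr2, ?_⟩
  rwa [cthickening_singleton x (le_of_lt hr2)] at hr1

lemma key_point {n : ℕ} (μ : Measure (Fin n → ℝ)) (μs : ℕ → Measure (Fin n → ℝ))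
    [IsFiniteMeasure μ] [∀ j, IsFiniteMeasure (μs j)]
    (hμ_na : ∀ x, μ {x} = 0) (hμs_na : ∀ j x, (μs j) {x} = 0)
    (hconv : ∀ f : (Fin n → ℝ) → ℝ, Continuous f →
      Tendsto (fun j => ∫ x, f x ∂(μs j)) atTop (𝓝 (∫ x, f x ∂μ)))
    {ε : ℝ} (hε : 0 < ε) (x : Fin n → ℝ) :
    ∃ ρ > 0, ∀ j, μs j (closedBall x ρ) < ENNReal.ofReal ε := by
  -- small ball for the limit measure
  obtain ⟨η₀, hη₀, hμB⟩ := small_cball μ x (hμ_na x)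
    (ε := ENNReal.ofReal (ε/3)) (ENNReal.ofReal_pos.mpr (by linarith))
  set η : ℝ := η₀ / 2 with hη_def
  have hηpos : 0 < η := by positivity
  -- Urysohn bump
  obtain ⟨f, hf0, hf1, hf01⟩ := exists_continuous_zero_one_of_isClosed
    (isOpen_ball (x := x) (ε := η₀)).isClosed_compl isClosed_closedBall
    (disjoint_compl_left.mono_right (closedBall_subset_ball (by linarith)))
  have hint : ∀ (ν : Measure (Fin n → ℝ)) [IsFiniteMeasure ν], Integrable (fun y => f y) ν := by
    intro ν _
    refine (integrable_const (1:ℝ)).mono' f.continuous.aestronglyMeasurable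
      (ae_of_all _ fun y => ?_)
    have h := hf01 y
    rw [Real.norm_eq_abs, abs_le]
    exact ⟨by linarith [h.1], h.2⟩
  -- lower bound
  have hlow : ∀ j, (μs j (closedBall x η)).toReal ≤ ∫ y, f y ∂(μs j) := by
    intro j
    have hind : ∫ y, (closedBall x η).indicator (fun _ => (1:ℝ)) y ∂(μs j)
        = (μs j (closedBall x η)).toReal := by
      rw [integral_indicator_const _ measurableSet_closedBall]; simp; rfl
    rw [← hind]
    refine integral_mono ((integrable_const (1:ℝ)).indicator measurableSet_closedBall)
      (hint _) fun y => ?_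
    by_cases hy : y ∈ closedBall x η
    · simp only [Set.indicator_of_mem hy, hf1 hy, Pi.one_apply, le_refl]
    · simp only [Set.indicator_of_notMem hy]
      exact (hf01 y).1
  -- upper bound
  have hup : ∫ y, f y ∂μ < ε / 3 := by
    have hind : ∫ y, (closedBall x η₀).indicator (fun _ => (1:ℝ)) y ∂μ
        = (μ (closedBall x η₀)).toReal := by
      rw [integral_indicator_const _ measurableSet_closedBall]; simp; rfl
    have hle : ∫ y, f y ∂μ ≤ (μ (closedBall x η₀)).toReal := by
      rw [← hind]
      refine integral_mono (hint _)
        ((integrable_const (1:ℝ)).indicator measurableSet_closedBall) fun y => ?_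
      by_cases hy : y ∈ ball x η₀
      · have hy' : y ∈ closedBall x η₀ := ball_subset_closedBall hy
        simp only [Set.indicator_of_mem hy', (hf01 y).2]
      · have : f y = 0 := hf0 hy
        rw [this]
        exact Set.indicator_nonneg (fun _ _ => zero_le_one) y
    have : (μ (closedBall x η₀)).toReal < ε / 3 := ENNReal.toReal_lt_of_lt_ofReal hμB
    linarith
  -- weak convergence gives a threshold J
  have hev : ∀ᶠ j in atTop, ∫ y, f y ∂(μs j) < ε / 2 :=
    (hconv (fun y => f y) f.continuous).eventually_lt_const (by linarith)
  obtain ⟨J, hJ⟩ := hev.exists_forall_of_atTop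
  -- handle finitely many indices below J
  have hfin : ∀ K : ℕ, ∃ ρ > 0, ρ ≤ η ∧ ∀ j < K, μs j (closedBall x ρ) < ENNReal.ofReal ε := by
    intro K
    induction K with
    | zero => exact ⟨η, hηpos, le_refl _, fun j hj => absurd hj (Nat.not_lt_zero j)⟩
    | succ K ih =>
      obtain ⟨ρ, hρ, hρη, hall⟩ := ih
      obtain ⟨ρ', hρ', hball'⟩ := small_cball (μs K) x (hμs_na K x)
        (ε := ENNReal.ofReal ε) (ENNReal.ofReal_pos.mpr hε)
      refine ⟨min ρ ρ', lt_min hρ hρ', (min_le_left _ _).trans hρη, fun j hj => ?_⟩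
      rcases Nat.lt_succ_iff_lt_or_eq.mp hj with h | h
      · exact lt_of_le_of_lt
          (measure_mono (closedBall_subset_closedBall (min_le_left _ _))) (hall j h)
      · subst h
        exact lt_of_le_of_lt
          (measure_mono (closedBall_subset_closedBall (min_le_right _ _))) hball'
  obtain ⟨ρ, hρpos, hρη, hsmall⟩ := hfin J
  refine ⟨ρ, hρpos, fun j => ?_⟩
  rcases lt_or_ge j J with h | h
  · exact hsmall j h
  · have h1 : (μs j (closedBall x η)).toReal < ε := by
      have := hlow j
      have := hJ j h
      linarith
    have h2 : μs j (closedBall x η) < ENNReal.ofReal ε :=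
      (ENNReal.lt_ofReal_iff_toReal_lt (measure_ne_top _ _)).mpr h1
    exact lt_of_le_of_lt (measure_mono (closedBall_subset_closedBall hρη)) h2

/-- Let `Q ⊂ ℝⁿ` be a closed cube and `μ_j, μ` finite nonnegative non-atomic
Borel measures on `Q` (i.e. supported in `Q`) with `μ_j → μ` weakly-* (tested against
continuous functions). Then for every `ε > 0` there is `δ > 0` such that every closed
axis-parallel sub-cube `Q' ⊆ Q` of Lebesgue measure less than `δ` satisfies
`sup_j μ_j(Q') < ε`. -/
theorem stmt2 (n : ℕ) (a : Fin n → ℝ) (L : ℝ) (hL : 0 < L)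
    (Q : Set (Fin n → ℝ)) (hQ : Q = Set.Icc a (fun i => a i + L))
    (μ : Measure (Fin n → ℝ)) (μs : ℕ → Measure (Fin n → ℝ))
    [IsFiniteMeasure μ] [∀ j, IsFiniteMeasure (μs j)]
    (hμQ : μ Qᶜ = 0) (hμsQ : ∀ j, (μs j) Qᶜ = 0)
    (hμ_na : ∀ x, μ {x} = 0) (hμs_na : ∀ j x, (μs j) {x} = 0)
    (hconv : ∀ f : (Fin n → ℝ) → ℝ, Continuous f →
      Tendsto (fun j => ∫ x, f x ∂(μs j)) atTop (𝓝 (∫ x, f x ∂μ))) :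
    ∀ ε : ℝ, 0 < ε → ∃ δ : ℝ, 0 < δ ∧
      ∀ (c : Fin n → ℝ) (r : ℝ), 0 < r →
        Set.Icc c (fun i => c i + r) ⊆ Q →
        volume (Set.Icc c (fun i => c i + r)) < ENNReal.ofReal δ →
        ∀ j, (μs j) (Set.Icc c (fun i => c i + r)) < ENNReal.ofReal ε := by

  intro ε hε
  choose ρ hρpos hρ using key_point μ μs hμ_na hμs_na hconv hε
  have hQc : IsCompact Q := hQ ▸ isCompact_Icc
  obtain ⟨t, htQ, hcover⟩ := hQc.elim_nhds_subcover (fun x => ball x (ρ x / 2))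
    (fun x _ => ball_mem_nhds x (by have := hρpos x; positivity))
  have haQ : a ∈ Q := by
    rw [hQ, Set.mem_Icc]
    exact ⟨le_refl _, fun i => by show a i ≤ a i + L; linarith⟩
  have htne : t.Nonempty := by
    have := hcover haQ
    rw [Set.mem_iUnion₂] at this
    obtain ⟨x, hx, -⟩ := this
    exact ⟨x, hx⟩
  set ρmin : ℝ := t.inf' htne (fun x => ρ x / 2) with hρmin_def
  have hρminpos : 0 < ρmin := by
    rw [hρmin_def, Finset.lt_inf'_iff]
    intro b _
    have := hρpos b
    positivity
  refine ⟨ρmin ^ n, by positivity, fun c r hr hsub hvol j => ?_⟩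
  have hcmem : c ∈ Set.Icc c (fun i => c i + r) := by
    rw [Set.mem_Icc]
    exact ⟨le_refl _, fun i => by show c i ≤ c i + r; linarith⟩
  have hcQ : c ∈ Q := hsub hcmem
  -- volume computation
  have hvol_eq : volume (Set.Icc c (fun i => c i + r)) = ENNReal.ofReal (r ^ n) := by
    rw [Real.volume_Icc_pi]
    simp only [add_sub_cancel_left]
    rw [Finset.prod_const, Finset.card_univ, Fintype.card_fin, ← ENNReal.ofReal_pow hr.le]
  have hrρ : r < ρmin := by
    by_contra h
    push_neg at h
    have : ENNReal.ofReal (ρmin ^ n) ≤ volume (Set.Icc c (fun i => c i + r)) := by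
      rw [hvol_eq]
      exact ENNReal.ofReal_le_ofReal (pow_le_pow_left₀ hρminpos.le h n)
    exact absurd hvol (not_lt.mpr this)
  -- find covering ball
  have := hcover hcQ
  rw [Set.mem_iUnion₂] at this
  obtain ⟨x, hxt, hcx⟩ := this
  have hρx : ρmin ≤ ρ x / 2 := Finset.inf'_le _ hxt
  have hsubball : Set.Icc c (fun i => c i + r) ⊆ closedBall x (ρ x) := by
    intro y hy
    rw [Set.mem_Icc] at hy
    have hyc : dist y c ≤ r := by
      rw [dist_pi_le_iff hr.le]
      intro i
      have h1 : c i ≤ y i := hy.1 i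
      have h2 : y i ≤ c i + r := hy.2 i
      rw [Real.dist_eq, abs_le]
      constructor <;> linarith
    have hcx' : dist c x < ρ x / 2 := mem_ball.mp hcx
    have : dist y x ≤ dist y c + dist c x := dist_triangle y c x
    rw [mem_closedBall]
    linarith
  exact lt_of_le_of_lt (measure_mono hsubball) (hρ x j)
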